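/- Let G be a finite graph with vertex weights in a commutative monoid S and edge weights γ. Then the V-polynomial admits the connected-partition expansion V(G) = Σ_{π ∈ P(G)} x(π) · ∏_{H ∈ C(π)} [q^1] Z_T(H; q, γ), where P(G) is the set of partitions of V(G) into blocks each inducing a connected subgraph, C(π) is the set of induced subgraphs on the blocks of π, x(π) = ∏_i x_{c_i} with c_i the sum of vertex weights in the i-th block, and [q^1] extracts the coefficient of q^1 in the multivariate Tutte polynomial Z_T(H;q,γ) = Σ_{A⊆E(H)} q^{k(A)} ∏_{e∈A} γ_e. -/

import Mathlib

open scoped Classical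
open Finset

structure MGraph (V E : Type) where
  ends : E → Sym2 V

namespace MGraph

variable {V E S R : Type} [Fintype V] [Fintype E]

/-- Two vertices are joined by an edge of `A`. -/
def adjRel (G : MGraph V E) (A : Finset E) (u v : V) : Prop :=
  ∃ e ∈ A, G.ends e = s(u, v)

/-- The setoid on vertices whose classes are the connected components of the
spanning subgraph `(V, A)`. -/
def compSetoid (G : MGraph V E) (A : Finset E) : Setoid V :=
  ⟨Relation.EqvGen (G.adjRel A), Relation.EqvGen.is_equivalence _⟩

/-- The connected components of the spanning subgraph `(V, A)`. -/
def Comp (G : MGraph V E) (A : Finset E) : Type := Quotient (G.compSetoid A)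

noncomputable instance (G : MGraph V E) (A : Finset E) : Fintype (G.Comp A) :=
  @Quotient.fintype V _ (G.compSetoid A) (Classical.decRel _)

/-- `k(A)`: the number of connected components of the spanning subgraph `(V, A)`. -/
noncomputable def kA (G : MGraph V E) (A : Finset E) : ℕ := Nat.card (G.Comp A)

/-- `u` and `v` are connected in the spanning subgraph `(V, A)`. -/
def Connects (G : MGraph V E) (A : Finset E) (u v : V) : Prop :=
  Relation.EqvGen (G.adjRel A) u v

/-- The endpoints of `e` are connected in the spanning subgraph `(V, A)`. -/
def EndsConnected (G : MGraph V E) (A : Finset E) (e : E) : Prop :=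
  ∃ u v, G.ends e = s(u, v) ∧ G.Connects A u v

def IsLoop (G : MGraph V E) (e : E) : Prop := (G.ends e).IsDiag

/-- `(V, A)` is a forest (acyclic spanning subgraph): every edge of `A` is a bridge of it. -/
def IsForest (G : MGraph V E) (A : Finset E) : Prop :=
  ∀ e ∈ A, ¬ G.EndsConnected (A.erase e) e

/-- All vertices are pairwise connected using edges of `A`. -/
def ConnectsAll (G : MGraph V E) (A : Finset E) : Prop := ∀ u v, G.Connects A u v

/-- A maximal spanning forest: a forest restricting to a spanning tree of each
connected component of `G`. -/
def IsSpanningTree (G : MGraph V E) (T : Finset E) : Prop :=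
  G.IsForest T ∧ ∀ u v, G.Connects T u v ↔ G.Connects Finset.univ u v

/-- `e ∈ T` is internally active: `e` is minimal in the cut
`{f : (T - e) ∪ {f} ∈ 𝒯(G)}`. -/
def IntActive [LinearOrder E] (G : MGraph V E) (T : Finset E) (e : E) : Prop :=
  e ∈ T ∧ ∀ f, G.IsSpanningTree (insert f (T.erase e)) → e ≤ f

/-- The edge set of the unique cycle of `T ∪ {e}` (when it exists):
`e` together with those `f ∈ T` whose removal disconnects the ends of `e`. -/
noncomputable def cycleEdges (G : MGraph V E) (T : Finset E) (e : E) : Finset E :=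
  insert e (T.filter fun f => ¬ G.EndsConnected (T.erase f) e)

/-- `e ∉ T` is externally active: `T ∪ {e}` contains a cycle through `e` and
`e` is the minimal edge of that cycle. -/
def ExtActive [LinearOrder E] (G : MGraph V E) (T : Finset E) (e : E) : Prop :=
  e ∉ T ∧ G.EndsConnected T e ∧ ∀ f ∈ G.cycleEdges T e, e ≤ f

/-- The vertex set of the component `c` of `(V, A)`. -/
noncomputable def compVerts (G : MGraph V E) (A : Finset E) (c : G.Comp A) : Finset V :=
  Finset.univ.filter fun v => (Quotient.mk (G.compSetoid A) v) = c

/-- The total vertex weight of the component `c` of `(V, A)`. -/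
noncomputable def compWeight [AddCommMonoid S] (G : MGraph V E) (A : Finset E)
    (ω : V → S) (c : G.Comp A) : S :=
  ∑ v ∈ G.compVerts A c, ω v

/-- The V-polynomial, defined by its state sum. -/
noncomputable def Vpoly [AddCommMonoid S] [CommRing R] (G : MGraph V E)
    (ω : V → S) (γ : E → R) : MvPolynomial S R :=
  ∑ A : Finset E, (∏ c : G.Comp A, MvPolynomial.X (G.compWeight A ω c)) *
    MvPolynomial.C (∏ e ∈ A, γ e)

/-- The multivariate Tutte polynomial `Z_T(G; q, γ)` as a polynomial in `q`. -/
noncomputable def ZT [CommRing R] (G : MGraph V E) (γ : E → R) : Polynomial R :=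
  ∑ A : Finset E, Polynomial.X ^ (G.kA A) * Polynomial.C (∏ e ∈ A, γ e)

/-- Deletion of the edge `e`. -/
def del (G : MGraph V E) (e : E) : MGraph V {f : E // f ≠ e} := ⟨fun f => G.ends f.1⟩

/-- Contraction of the edge `e`: vertices are the components of `(V, {e})`. -/
noncomputable def contract (G : MGraph V E) (e : E) : MGraph (G.Comp {e}) {f : E // f ≠ e} :=
  ⟨fun f => (G.ends f.1).map (Quotient.mk (G.compSetoid {e}))⟩

/-- The forest `T` with the edges of `B` contracted: vertices are the components
of `(V, B)` and edges are `T \ B`. -/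
noncomputable def contractIn (G : MGraph V E) (T B : Finset E) :
    MGraph (G.Comp B) ↥(T \ B : Finset E) :=
  ⟨fun f => (G.ends f.1).map (Quotient.mk (G.compSetoid B))⟩

/-- The edges of `G` with both ends inside `P`. -/
noncomputable def edgesIn (G : MGraph V E) (P : Finset V) : Finset E :=
  Finset.univ.filter fun e => ∀ v ∈ G.ends e, v ∈ P

/-- The subgraph of `G` induced by the vertex set `P`. -/
noncomputable def induce (G : MGraph V E) (P : Finset V) : MGraph ↥P ↥(G.edgesIn P) :=
  ⟨fun e => (G.ends e.1).pmap (fun v hv => (⟨v, hv⟩ : ↥P))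
    (by have he := e.2; simp only [edgesIn, Finset.mem_filter] at he; exact he.2)⟩

/-- The block `B` induces a connected subgraph of `G`. -/
def BlockConnected (G : MGraph V E) (B : Finset V) : Prop :=
  ∀ u ∈ B, ∀ v ∈ B, Relation.EqvGen (G.adjRel (G.edgesIn B)) u v

/-- A connected partition of `V(G)`: every vertex lies in exactly one block,
blocks are nonempty, and each block induces a connected subgraph. -/
def IsConnectedPartition (G : MGraph V E) (P : Finset (Finset V)) : Prop :=
  (∀ B ∈ P, B.Nonempty) ∧ (∀ v : V, ∃! B, B ∈ P ∧ v ∈ B) ∧ ∀ B ∈ P, G.BlockConnected B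

/-- The partition `Π(A)` of `V(G)` into the components of `(V, A)`. -/
noncomputable def partitionOf (G : MGraph V E) (A : Finset E) : Finset (Finset V) :=
  Finset.univ.image fun c : G.Comp A => G.compVerts A c

/-- The internally inactive edges of the spanning tree `T`. -/
noncomputable def intInactives [LinearOrder E] (G : MGraph V E) (T : Finset E) : Finset E :=
  T.filter fun e => ¬ G.IntActive T e

/-- The internally active edges of the spanning tree `T`. -/
noncomputable def intActives [LinearOrder E] (G : MGraph V E) (T : Finset E) : Finset E :=
  T.filter fun e => G.IntActive T e

/-- The externally active edges w.r.t. the spanning tree / forest `T`. -/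
noncomputable def extActives [LinearOrder E] (G : MGraph V E) (T : Finset E) : Finset E :=
  Finset.univ.filter fun e => G.ExtActive T e

/-- Kronecker delta `δ(σ_i, σ_j)` for the two ends of the edge `e`. -/
noncomputable def edgeDelta (G : MGraph V E) {q : ℕ} (σ : V → Fin q) (e : E) : ℂ :=
  Sym2.lift ⟨fun u v => if σ u = σ v then 1 else 0, fun u v => by simp [eq_comm]⟩ (G.ends e)

/-- The Potts partition function with variable interactions `J` and
field vectors `M`. -/
noncomputable def Zext (G : MGraph V E) (q : ℕ) (β : ℂ) (J : E → ℂ) (M : V → Fin q → ℂ) : ℂ :=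
  ∑ σ : V → Fin q, Complex.exp (β * ((∑ e : E, J e * G.edgeDelta σ e) +
    ∑ v : V, ∑ α : Fin q, M v α * (if α = σ v then 1 else 0)))

/-- The Potts partition function with constant interaction `J` and constant
field `H` favouring the first spin. -/
noncomputable def ZconstField (G : MGraph V E) (q : ℕ) (β J H : ℂ) : ℂ :=
  ∑ σ : V → Fin q, Complex.exp (β * (J * (∑ e : E, G.edgeDelta σ e) +
    H * ∑ v : V, (if (σ v : ℕ) = 0 then (1 : ℂ) else 0)))

/-- The zero-field Potts partition function with constant interaction `J`. -/
noncomputable def Zzero (G : MGraph V E) (q : ℕ) (β J : ℂ) : ℂ :=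
  ∑ σ : V → Fin q, Complex.exp (β * J * ∑ e : E, G.edgeDelta σ e)

end MGraph
namespace MGraph

variable {V E S R : Type} [Fintype V] [Fintype E]

lemma exists_pair (s : Sym2 V) : ∃ x y, s = s(x, y) :=
  Sym2.ind (fun x y => ⟨x, y, rfl⟩) s

lemma adjRel_mono (G : MGraph V E) {A A' : Finset E} (h : A ⊆ A') {u v : V}
    (hadj : G.adjRel A u v) : G.adjRel A' u v := by
  obtain ⟨e, he, hev⟩ := hadj; exact ⟨e, h he, hev⟩

lemma eqvGen_mono (G : MGraph V E) {A A' : Finset E} (h : A ⊆ A') {u v : V}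
    (hc : Relation.EqvGen (G.adjRel A) u v) : Relation.EqvGen (G.adjRel A') u v :=
  (Relation.EqvGen.mono (fun a b (hr : G.adjRel A a b) => G.adjRel_mono h hr) :
    Relation.EqvGen (G.adjRel A) ≤ Relation.EqvGen (G.adjRel A')) u v hc

lemma mem_compVerts (G : MGraph V E) {A : Finset E} {c : G.Comp A} {v : V} :
    v ∈ G.compVerts A c ↔ Quotient.mk (G.compSetoid A) v = c := by
  simp [compVerts]

lemma mk_eq_mk (G : MGraph V E) {A : Finset E} {u v : V} :
    (Quotient.mk (G.compSetoid A) u = Quotient.mk (G.compSetoid A) v) ↔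
      Relation.EqvGen (G.adjRel A) u v := by
  rw [Quotient.eq]; rfl

lemma mem_edgesIn (G : MGraph V E) {B : Finset V} {e : E} :
    e ∈ G.edgesIn B ↔ ∀ v ∈ G.ends e, v ∈ B := by
  simp [edgesIn]

lemma mem_iff_of_connects (G : MGraph V E) {A : Finset E} {B : Finset V} (hA : A ⊆ G.edgesIn B)
    {u v : V} (h : Relation.EqvGen (G.adjRel A) u v) : u ∈ B ↔ v ∈ B := by
  induction h with
  | rel x y hxy =>
      obtain ⟨e, he, hev⟩ := hxy
      have hx := (G.mem_edgesIn.mp (hA he)) x (by rw [hev]; exact Sym2.mem_mk_left x y)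
      have hy := (G.mem_edgesIn.mp (hA he)) y (by rw [hev]; exact Sym2.mem_mk_right x y)
      simp [hx, hy]
  | refl x => exact Iff.rfl
  | symm x y _ ih => exact ih.symm
  | trans x y z _ _ ih1 ih2 => exact ih1.trans ih2

lemma eqvGen_restrict (G : MGraph V E) {A : Finset E} {u v : V}
    (h : Relation.EqvGen (G.adjRel A) u v) :
    Relation.EqvGen
      (G.adjRel (A ∩ G.edgesIn (G.compVerts A (Quotient.mk (G.compSetoid A) u)))) u v := by
  induction h with
  | rel x y hxy =>
      apply Relation.EqvGen.rel
      obtain ⟨e, he, hev⟩ := hxy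
      refine ⟨e, Finset.mem_inter.mpr ⟨he, ?_⟩, hev⟩
      rw [G.mem_edgesIn]
      intro w hw
      rw [hev, Sym2.mem_iff] at hw
      refine G.mem_compVerts.mpr ?_
      rcases hw with rfl | rfl
      · rfl
      · exact (G.mk_eq_mk.mpr (Relation.EqvGen.rel _ _ ⟨e, he, hev⟩)).symm
  | refl x => exact Relation.EqvGen.refl x
  | symm x y hxy ih =>
      have hxy' : Quotient.mk (G.compSetoid A) x = Quotient.mk (G.compSetoid A) y :=
        G.mk_eq_mk.mpr hxy
      rw [← hxy']
      exact Relation.EqvGen.symm _ _ ih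
  | trans x y z hxy hyz ih1 ih2 =>
      have e1 : Quotient.mk (G.compSetoid A) x = Quotient.mk (G.compSetoid A) y :=
        G.mk_eq_mk.mpr hxy
      refine Relation.EqvGen.trans _ y _ ih1 ?_
      rw [e1]; exact ih2

lemma mk_mem_compVerts (G : MGraph V E) (A : Finset E) (v : V) :
    v ∈ G.compVerts A (Quotient.mk (G.compSetoid A) v) := G.mem_compVerts.mpr rfl

lemma compVerts_injective (G : MGraph V E) (A : Finset E) :
    Function.Injective (G.compVerts A) := by
  intro c c' h
  obtain ⟨v⟩ := c
  have hv := G.mk_mem_compVerts A v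
  rw [show Quotient.mk (G.compSetoid A) v = Quot.mk _ v from rfl, h] at hv
  exact G.mem_compVerts.mp hv

lemma conn_inter (G : MGraph V E) (A : Finset E) {c : G.Comp A} {u v : V}
    (hu : u ∈ G.compVerts A c) (hv : v ∈ G.compVerts A c) :
    Relation.EqvGen (G.adjRel (A ∩ G.edgesIn (G.compVerts A c))) u v := by
  have hu' := G.mem_compVerts.mp hu
  have hv' := G.mem_compVerts.mp hv
  have h := G.mk_eq_mk.mp (hu'.trans hv'.symm)
  have h2 := G.eqvGen_restrict h
  rwa [hu'] at h2

lemma isConnectedPartition_partitionOf (G : MGraph V E) (A : Finset E) :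
    G.IsConnectedPartition (G.partitionOf A) := by
  refine ⟨?_, ?_, ?_⟩
  · intro B hB
    obtain ⟨c, -, rfl⟩ := Finset.mem_image.mp hB
    obtain ⟨v⟩ := c
    exact ⟨v, G.mk_mem_compVerts A v⟩
  · intro v
    refine ⟨G.compVerts A (Quotient.mk (G.compSetoid A) v),
      ⟨Finset.mem_image.mpr ⟨_, Finset.mem_univ _, rfl⟩, G.mk_mem_compVerts A v⟩, ?_⟩
    rintro B ⟨hB, hvB⟩
    obtain ⟨c, -, rfl⟩ := Finset.mem_image.mp hB
    rw [← G.mem_compVerts.mp hvB]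
  · intro B hB u hu v hv
    obtain ⟨c, -, rfl⟩ := Finset.mem_image.mp hB
    exact G.eqvGen_mono Finset.inter_subset_right (G.conn_inter A hu hv)

lemma block_eq_block (G : MGraph V E) {P : Finset (Finset V)} (hP : G.IsConnectedPartition P)
    {B B' : Finset V} (hB : B ∈ P) (hB' : B' ∈ P) {v : V} (hv : v ∈ B) (hv' : v ∈ B') :
    B = B' := by
  obtain ⟨C, -, hC⟩ := hP.2.1 v
  rw [hC B ⟨hB, hv⟩, hC B' ⟨hB', hv'⟩]

end MGraph
namespace MGraph
variable {V E S R : Type} [Fintype V] [Fintype E]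

noncomputable def goodSets (G : MGraph V E) (B : Finset V) : Finset (Finset E) :=
  (G.edgesIn B).powerset.filter fun C => ∀ u ∈ B, ∀ v ∈ B, Relation.EqvGen (G.adjRel C) u v

lemma mem_goodSets {G : MGraph V E} {B : Finset V} {C : Finset E} :
    C ∈ G.goodSets B ↔ C ⊆ G.edgesIn B ∧
      ∀ u ∈ B, ∀ v ∈ B, Relation.EqvGen (G.adjRel C) u v := by
  simp [goodSets]

lemma pmap_eq_pair_iff {B : Finset V} {u v : ↥B} : ∀ {s : Sym2 V} (h : ∀ x ∈ s, x ∈ B),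
    (s.pmap (fun x hx => (⟨x, hx⟩ : ↥B)) h = s(u, v) ↔ s = s(u.1, v.1)) := by
  intro s
  induction s using Sym2.inductionOn with
  | hf x y =>
    intro h
    rw [Sym2.pmap_pair]
    simp [Sym2.eq_iff, Subtype.ext_iff]

lemma induce_ends_eq_iff (G : MGraph V E) {B : Finset V} {e : ↥(G.edgesIn B)} {u v : ↥B} :
    (G.induce B).ends e = s(u, v) ↔ G.ends e.1 = s(u.1, v.1) :=
  pmap_eq_pair_iff _

lemma image_val_subset_edgesIn (G : MGraph V E) {B : Finset V} (A' : Finset ↥(G.edgesIn B)) :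
    A'.image Subtype.val ⊆ G.edgesIn B := by
  intro e he
  obtain ⟨e', -, rfl⟩ := Finset.mem_image.mp he
  exact e'.2

lemma induce_eqvGen_forward (G : MGraph V E) {B : Finset V} {A' : Finset ↥(G.edgesIn B)}
    {u v : ↥B} (h : Relation.EqvGen ((G.induce B).adjRel A') u v) :
    Relation.EqvGen (G.adjRel (A'.image Subtype.val)) u.1 v.1 := by
  induction h with
  | rel x y hxy =>
      obtain ⟨e, he, hev⟩ := hxy
      exact Relation.EqvGen.rel _ _
        ⟨e.1, Finset.mem_image.mpr ⟨e, he, rfl⟩, G.induce_ends_eq_iff.mp hev⟩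
  | refl x => exact Relation.EqvGen.refl _
  | symm x y _ ih => exact Relation.EqvGen.symm _ _ ih
  | trans x y z _ _ ih1 ih2 => exact Relation.EqvGen.trans _ _ _ ih1 ih2

lemma induce_eqvGen_backward (G : MGraph V E) {B : Finset V} {A' : Finset ↥(G.edgesIn B)}
    {a b : V} (h : Relation.EqvGen (G.adjRel (A'.image Subtype.val)) a b) :
    ∀ (ha : a ∈ B) (hb : b ∈ B),
      Relation.EqvGen ((G.induce B).adjRel A') ⟨a, ha⟩ ⟨b, hb⟩ := by
  induction h with
  | rel x y hxy =>
      intro hx hy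
      obtain ⟨e, he, hev⟩ := hxy
      obtain ⟨e', he', rfl⟩ := Finset.mem_image.mp he
      exact Relation.EqvGen.rel _ _ ⟨e', he',
        (G.induce_ends_eq_iff (u := ⟨x, hx⟩) (v := ⟨y, hy⟩)).mpr hev⟩
  | refl x =>
      intro hx hy
      have : (⟨x, hx⟩ : ↥B) = ⟨x, hy⟩ := Subtype.ext rfl
      rw [this]
      exact Relation.EqvGen.refl _
  | symm x y hxy ih =>
      intro hx hy
      exact Relation.EqvGen.symm _ _ (ih hy hx)
  | trans x y z hxy hyz ih1 ih2 =>
      intro hx hz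
      have hy : y ∈ B :=
        (G.mem_iff_of_connects (G.image_val_subset_edgesIn A') hxy).mp hx
      exact Relation.EqvGen.trans _ _ _ (ih1 hx hy) (ih2 hy hz)

lemma kA_induce_eq_one_iff (G : MGraph V E) {B : Finset V} (hB : B.Nonempty)
    (A' : Finset ↥(G.edgesIn B)) :
    (G.induce B).kA A' = 1 ↔
      ∀ u ∈ B, ∀ v ∈ B, Relation.EqvGen (G.adjRel (A'.image Subtype.val)) u v := by
  rw [kA, Nat.card_eq_one_iff_unique]
  constructor
  · rintro ⟨hs, -⟩ u hu v hv
    have := hs.elim (Quotient.mk ((G.induce B).compSetoid A') ⟨u, hu⟩)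
      (Quotient.mk ((G.induce B).compSetoid A') ⟨v, hv⟩)
    exact G.induce_eqvGen_forward ((G.induce B).mk_eq_mk.mp this)
  · intro h
    obtain ⟨w, hw⟩ := hB
    refine ⟨⟨fun x y => ?_⟩, ⟨Quotient.mk ((G.induce B).compSetoid A') ⟨w, hw⟩⟩⟩
    obtain ⟨u⟩ := x
    obtain ⟨v⟩ := y
    exact Quotient.sound (G.induce_eqvGen_backward (h u.1 u.2 v.1 v.2) u.2 v.2)

lemma coeff_one_ZT [CommRing R] (G : MGraph V E) (γ : E → R) {B : Finset V} (hB : B.Nonempty) :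
    ((G.induce B).ZT (fun f => γ f.1)).coeff 1 = ∑ C ∈ G.goodSets B, ∏ e ∈ C, γ e := by
  rw [ZT, Polynomial.finset_sum_coeff]
  have step : ∀ A' : Finset ↥(G.edgesIn B),
      (Polynomial.X ^ ((G.induce B).kA A') * Polynomial.C (∏ e ∈ A', γ e.1)).coeff 1
      = if (G.induce B).kA A' = 1 then ∏ e ∈ A', γ e.1 else 0 := by
    intro A'
    rw [mul_comm, Polynomial.coeff_C_mul, Polynomial.coeff_X_pow]
    by_cases h : (G.induce B).kA A' = 1 <;> simp [h, eq_comm]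
  rw [Finset.sum_congr rfl fun A' _ => step A', ← Finset.sum_filter]
  refine Finset.sum_nbij' (i := fun A' => A'.image Subtype.val)
    (j := fun C => C.subtype (fun e => e ∈ G.edgesIn B)) ?_ ?_ ?_ ?_ ?_
  · intro A' hA'
    have h1 := (Finset.mem_filter.mp hA').2
    exact mem_goodSets.mpr ⟨G.image_val_subset_edgesIn A',
      (G.kA_induce_eq_one_iff hB A').mp h1⟩
  · intro C hC
    obtain ⟨hsub, hconn⟩ := mem_goodSets.mp hC
    refine Finset.mem_filter.mpr ⟨Finset.mem_univ _, (G.kA_induce_eq_one_iff hB _).mpr ?_⟩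
    have himg : (C.subtype (fun e => e ∈ G.edgesIn B)).image Subtype.val = C := by
      ext e
      simp only [Finset.mem_image, Finset.mem_subtype, Subtype.exists,
        exists_and_left, exists_prop, exists_eq_right_right]
      exact and_iff_left_iff_imp.mpr fun h => hsub h
    rw [himg]
    exact hconn
  · intro A' _
    ext e
    rw [Finset.mem_subtype, Finset.mem_image]
    exact ⟨fun ⟨x, hx, hxe⟩ => (Subtype.ext hxe : x = e) ▸ hx, fun h => ⟨e, h, rfl⟩⟩
  · intro C hC
    obtain ⟨hsub, -⟩ := mem_goodSets.mp hC
    ext e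
    simp only [Finset.mem_image, Finset.mem_subtype, Subtype.exists,
      exists_and_left, exists_prop, exists_eq_right_right]
    exact and_iff_left_iff_imp.mpr fun h => hsub h
  · intro A' _
    exact (Finset.prod_image fun x _ y _ h => Subtype.ext h).symm

end MGraph
namespace MGraph
variable {V E S R : Type} [Fintype V] [Fintype E]

lemma connects_mem_block_iff (G : MGraph V E) {P : Finset (Finset V)}
    (hP : G.IsConnectedPartition P) {A : Finset E}
    (hsub : ∀ e ∈ A, ∃ B ∈ P, e ∈ G.edgesIn B) {v w : V}
    (h : Relation.EqvGen (G.adjRel A) v w) :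
    ∀ B ∈ P, (v ∈ B ↔ w ∈ B) := by
  induction h with
  | rel x y hxy =>
      intro B hB
      obtain ⟨e, he, hev⟩ := hxy
      obtain ⟨B', hB', heB'⟩ := hsub e he
      have hx : x ∈ B' := G.mem_edgesIn.mp heB' x (by rw [hev]; exact Sym2.mem_mk_left x y)
      have hy : y ∈ B' := G.mem_edgesIn.mp heB' y (by rw [hev]; exact Sym2.mem_mk_right x y)
      constructor
      · intro hxB; rwa [G.block_eq_block hP hB hB' hxB hx]
      · intro hyB; rwa [G.block_eq_block hP hB hB' hyB hy]
  | refl x => intro B _; exact Iff.rfl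
  | symm x y _ ih => intro B hB; exact (ih B hB).symm
  | trans x y z _ _ ih1 ih2 => intro B hB; exact (ih1 B hB).trans (ih2 B hB)

lemma partitionOf_eq (G : MGraph V E) {P : Finset (Finset V)}
    (hP : G.IsConnectedPartition P) {A : Finset E}
    (hsub : ∀ e ∈ A, ∃ B ∈ P, e ∈ G.edgesIn B)
    (hconn : ∀ B ∈ P, ∀ u ∈ B, ∀ v ∈ B, Relation.EqvGen (G.adjRel A) u v) :
    G.partitionOf A = P := by
  have comp_eq : ∀ B ∈ P, ∀ v ∈ B, G.compVerts A (Quotient.mk (G.compSetoid A) v) = B := by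
    intro B hB v hv
    ext w
    refine Iff.trans G.mem_compVerts ?_
    constructor
    · intro hw
      have h := G.mk_eq_mk.mp hw
      exact (G.connects_mem_block_iff hP hsub h B hB).mpr hv
    · intro hw
      exact G.mk_eq_mk.mpr (Relation.EqvGen.symm _ _ (hconn B hB v hv w hw))
  ext X
  constructor
  · intro hX
    obtain ⟨c, -, rfl⟩ := Finset.mem_image.mp hX
    obtain ⟨v⟩ := c
    obtain ⟨B, ⟨hB, hvB⟩, -⟩ := hP.2.1 v
    rw [show Quot.mk _ v = Quotient.mk (G.compSetoid A) v from rfl, comp_eq B hB v hvB]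
    exact hB
  · intro hX
    obtain ⟨v, hv⟩ := hP.1 X hX
    exact Finset.mem_image.mpr ⟨Quotient.mk (G.compSetoid A) v, Finset.mem_univ _,
      comp_eq X hX v hv⟩

lemma fiber_sum [CommRing R] (G : MGraph V E) (γ : E → R) {P : Finset (Finset V)}
    (hP : G.IsConnectedPartition P) :
    ∑ A ∈ Finset.univ.filter (fun A => G.partitionOf A = P), ∏ e ∈ A, γ e
      = ∏ B ∈ P, ∑ C ∈ G.goodSets B, ∏ e ∈ C, γ e := by
  rw [Finset.prod_sum]
  have edge_block_eq : ∀ {B B' : Finset V}, B ∈ P → B' ∈ P → ∀ {e : E},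
      e ∈ G.edgesIn B → e ∈ G.edgesIn B' → B = B' := by
    intro B B' hB hB' e he he'
    obtain ⟨x, y, hxy⟩ := exists_pair (G.ends e)
    have hx : x ∈ B := G.mem_edgesIn.mp he x (by rw [hxy]; exact Sym2.mem_mk_left x y)
    have hx' : x ∈ B' := G.mem_edgesIn.mp he' x (by rw [hxy]; exact Sym2.mem_mk_left x y)
    exact G.block_eq_block hP hB hB' hx hx'
  have key_biUnion : ∀ A ∈ Finset.univ.filter (fun A => G.partitionOf A = P),
      P.attach.biUnion (fun B => A ∩ G.edgesIn B.1) = A := by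
    intro A hA
    have hPA : G.partitionOf A = P := (Finset.mem_filter.mp hA).2
    ext e
    simp only [Finset.mem_biUnion, Finset.mem_attach, true_and, Finset.mem_inter,
      Subtype.exists]
    constructor
    · rintro ⟨B, hB, he, -⟩; exact he
    · intro he
      obtain ⟨x, y, hxy⟩ := exists_pair (G.ends e)
      refine ⟨G.compVerts A (Quotient.mk (G.compSetoid A) x), ?_, he, ?_⟩
      · rw [← hPA]
        exact Finset.mem_image.mpr ⟨_, Finset.mem_univ _, rfl⟩
      · rw [G.mem_edgesIn]
        intro w hw
        rw [hxy, Sym2.mem_iff] at hw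
        refine G.mem_compVerts.mpr ?_
        rcases hw with rfl | rfl
        · rfl
        · exact (G.mk_eq_mk.mpr (Relation.EqvGen.rel _ _ ⟨e, he, hxy⟩)).symm
  refine Finset.sum_nbij' (i := fun A => fun B _ => A ∩ G.edgesIn B)
    (j := fun p => P.attach.biUnion fun B => p B.1 B.2) ?_ ?_ ?_ ?_ ?_
  · intro A hA
    have hPA : G.partitionOf A = P := (Finset.mem_filter.mp hA).2
    rw [Finset.mem_pi]
    intro B hB
    refine mem_goodSets.mpr ⟨Finset.inter_subset_right, ?_⟩
    rw [← hPA] at hB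
    obtain ⟨c, -, rfl⟩ := Finset.mem_image.mp hB
    intro u hu v hv
    exact G.conn_inter A hu hv
  · intro p hp
    rw [Finset.mem_pi] at hp
    refine Finset.mem_filter.mpr ⟨Finset.mem_univ _, G.partitionOf_eq hP ?_ ?_⟩
    · intro e he
      obtain ⟨B, -, heB⟩ := Finset.mem_biUnion.mp he
      exact ⟨B.1, B.2, (mem_goodSets.mp (hp B.1 B.2)).1 heB⟩
    · intro B hB u hu v hv
      refine G.eqvGen_mono ?_ ((mem_goodSets.mp (hp B hB)).2 u hu v hv)
      intro e he
      exact Finset.mem_biUnion.mpr ⟨⟨B, hB⟩, Finset.mem_attach _ _, he⟩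
  · intro A hA
    exact key_biUnion A hA
  · intro p hp
    rw [Finset.mem_pi] at hp
    funext B hB
    ext e
    simp only [Finset.mem_inter, Finset.mem_biUnion, Finset.mem_attach, true_and,
      Subtype.exists]
    constructor
    · rintro ⟨⟨B', hB', heB'⟩, heB⟩
      have hBB' : B' = B := edge_block_eq hB' hB ((mem_goodSets.mp (hp B' hB')).1 heB') heB
      subst hBB'
      exact heB'
    · intro he
      exact ⟨⟨B, hB, he⟩, (mem_goodSets.mp (hp B hB)).1 he⟩
  · intro A hA
    have hd : Set.PairwiseDisjoint (↑P.attach)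
        (fun B : {x // x ∈ P} => A ∩ G.edgesIn B.1) := by
      intro B _ B' _ hne
      simp only [Function.onFun]
      rw [Finset.disjoint_left]
      intro e he he'
      have := edge_block_eq B.2 B'.2 (Finset.mem_inter.mp he).2 (Finset.mem_inter.mp he').2
      exact hne (Subtype.ext this)
    rw [show (∏ e ∈ A, γ e) = ∏ e ∈ P.attach.biUnion (fun B => A ∩ G.edgesIn B.1), γ e by
      rw [key_biUnion A hA], Finset.prod_biUnion hd]

lemma prod_X_comp [AddCommMonoid S] [CommRing R] (G : MGraph V E) (ω : V → S) (A : Finset E) :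
    ∏ c : G.Comp A, (MvPolynomial.X (G.compWeight A ω c) : MvPolynomial S R)
      = ∏ B ∈ G.partitionOf A, MvPolynomial.X (∑ v ∈ B, ω v) := by
  rw [partitionOf, Finset.prod_image (fun c _ c' _ h => G.compVerts_injective A h)]
  rfl

end MGraph

/-- Connected-partition expansion of the V-polynomial:
`V(G) = Σ_{π∈P(G)} x(π) ∏_{H∈C(π)} [q^1] Z_T(H;q,γ)`. -/
theorem Vpoly_connected_partition_expansion {V E S R : Type} [Fintype V] [Fintype E]
    [AddCommMonoid S] [CommRing R] (G : MGraph V E) (ω : V → S) (γ : E → R) :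
    G.Vpoly ω γ =
      ∑ P ∈ Finset.univ.filter (fun P => G.IsConnectedPartition P),
        (∏ B ∈ P, MvPolynomial.X (∑ v ∈ B, ω v)) *
        MvPolynomial.C (∏ B ∈ P, ((G.induce B).ZT (fun f => γ f.1)).coeff 1) := by
  rw [MGraph.Vpoly,
    ← Finset.sum_fiberwise_of_maps_to (g := fun A => G.partitionOf A)
      (fun A _ => Finset.mem_filter.mpr
        ⟨Finset.mem_univ _, G.isConnectedPartition_partitionOf A⟩)
      (fun A => (∏ c : G.Comp A, MvPolynomial.X (G.compWeight A ω c)) *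
        MvPolynomial.C (∏ e ∈ A, γ e))]
  refine Finset.sum_congr rfl fun P hP => ?_
  have hP' : G.IsConnectedPartition P := (Finset.mem_filter.mp hP).2
  have step1 : ∀ A ∈ Finset.univ.filter (fun A => G.partitionOf A = P),
      (∏ c : G.Comp A, MvPolynomial.X (G.compWeight A ω c)) *
        MvPolynomial.C (∏ e ∈ A, γ e)
      = (∏ B ∈ P, (MvPolynomial.X (∑ v ∈ B, ω v) : MvPolynomial S R)) *
        MvPolynomial.C (∏ e ∈ A, γ e) := by
    intro A hA
    rw [G.prod_X_comp ω A, (Finset.mem_filter.mp hA).2]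
  rw [Finset.sum_congr rfl step1, ← Finset.mul_sum, ← map_sum, G.fiber_sum γ hP']
  congr 1
  rw [Finset.prod_congr rfl fun B hB => G.coeff_one_ZT γ (hP'.1 B hB)]
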